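/- Fix an integer d ≥ 1. For every point p ∈ ℝ^d and every radius r > 0 such that the closed ball Q = closedBall(p, r) is contained in the unit cube [0,1]^d, there exist a level k ∈ ℕ with 2^(−k) < 4r and a collection of at most 2^d dyadic cubes of level k whose union contains Q; in particular the total volume of these cubes is less than 2^d·(4r)^d. -/

import Mathlib

open MeasureTheory Metric Set

/-- The dyadic cube of level `k` with index vector `a` in the unit cube `[0,1]^d`:
`∏ᵢ [aᵢ·2⁻ᵏ, (aᵢ+1)·2⁻ᵏ]`. -/
def dyadicCube (d k : ℕ) (a : Fin d → ℕ) : Set (EuclideanSpace ℝ (Fin d)) :=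
  {x | ∀ i, x i ∈ Icc ((a i : ℝ) / 2 ^ k) (((a i : ℝ) + 1) / 2 ^ k)}

/-- The unit cube `[0,1]^d`. -/
def unitCube (d : ℕ) : Set (EuclideanSpace ℝ (Fin d)) := {x | ∀ i, x i ∈ Icc (0 : ℝ) 1}

lemma coord_abs_le_dist {d : ℕ} (x y : EuclideanSpace ℝ (Fin d)) (i : Fin d) :
    |x i - y i| ≤ dist x y := by
  rw [EuclideanSpace.dist_eq]
  calc |x i - y i| = Real.sqrt ((x i - y i) ^ 2) := (Real.sqrt_sq_eq_abs _).symm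
    _ ≤ _ := by
        apply Real.sqrt_le_sqrt
        have := Finset.single_le_sum (f := fun j => dist (x j) (y j) ^ 2)
          (fun j _ => sq_nonneg _) (Finset.mem_univ i)
        simpa [Real.dist_eq] using this

lemma volume_dyadicCube (d k : ℕ) (a : Fin d → ℕ) :
    volume (dyadicCube d k a) = (ENNReal.ofReal (((2:ℝ) ^ k)⁻¹)) ^ d := by
  have heq : dyadicCube d k a = ((MeasurableEquiv.toLp 2 (Fin d → ℝ)).symm) ⁻¹'
      (Set.univ.pi fun i => Icc ((a i : ℝ) / 2 ^ k) (((a i : ℝ) + 1) / 2 ^ k)) := by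
    ext x
    simp [dyadicCube, MeasurableEquiv.toLp, Set.mem_pi, Pi.le_def, forall_and]; exact Iff.rfl
  rw [heq, (EuclideanSpace.volume_preserving_symm_measurableEquiv_toLp (Fin d)).measure_preimage
    (MeasurableSet.univ_pi (fun i => measurableSet_Icc)).nullMeasurableSet,
    volume_pi_pi]
  have hlen : ∀ i : Fin d, ((a i : ℝ) + 1) / 2 ^ k - (a i : ℝ) / 2 ^ k = ((2:ℝ) ^ k)⁻¹ := by
    intro i; field_simp; ring
  simp only [Real.volume_Icc, hlen]
  rw [Finset.prod_const, Finset.card_univ, Fintype.card_fin]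

theorem cube_tiling_arrwwid_upper_bound (d : ℕ) (hd : 1 ≤ d)
    (p : EuclideanSpace ℝ (Fin d)) (r : ℝ) (hr : 0 < r)
    (hQ : closedBall p r ⊆ unitCube d) :
    ∃ (k : ℕ) (S : Finset (Fin d → ℕ)),
      ((2 : ℝ) ^ k)⁻¹ < 4 * r ∧
      S.card ≤ 2 ^ d ∧
      (∀ a ∈ S, ∀ i, a i < 2 ^ k) ∧
      closedBall p r ⊆ ⋃ a ∈ S, dyadicCube d k a ∧
      ∑ a ∈ S, volume (dyadicCube d k a) < ENNReal.ofReal (2 ^ d * (4 * r) ^ d) := by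
  classical
  have hr4 : (0:ℝ) < 4 * r := by linarith
  -- coordinate bounds
  have hcoord : ∀ i : Fin d, 0 ≤ p i - r ∧ p i + r ≤ 1 := by
    intro i
    have h1 : (p + r • EuclideanSpace.single i (1:ℝ)) ∈ closedBall p r := by
      rw [mem_closedBall, dist_self_add_left, norm_smul, EuclideanSpace.norm_single]
      simp [abs_of_pos hr]
    have h2 : (p - r • EuclideanSpace.single i (1:ℝ)) ∈ closedBall p r := by
      rw [mem_closedBall, dist_self_sub_left, norm_smul, EuclideanSpace.norm_single]
      simp [abs_of_pos hr]
    have h1' := (hQ h1) i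
    have h2' := (hQ h2) i
    simp only [PiLp.add_apply, PiLp.sub_apply, PiLp.smul_apply,
      EuclideanSpace.single_apply, if_pos rfl, if_true, smul_eq_mul, mul_one, mem_Icc] at h1' h2'
    constructor <;> linarith [h1'.2, h2'.1]
  have h2r1 : 2 * r ≤ 1 := by
    have := hcoord ⟨0, hd⟩
    linarith [this.1, this.2]
  -- choose the level
  have hex : ∃ n : ℕ, 1 / (4 * r) < 2 ^ n := pow_unbounded_of_one_lt _ one_lt_two
  set k₀ := Nat.find hex with hk₀def
  set k := max k₀ 1 with hkdef
  have hk1 : 1 ≤ k := le_max_right _ _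
  have hpowpos : (0:ℝ) < 2 ^ k := by positivity
  have hspec : 1 / (4 * r) < 2 ^ k₀ := Nat.find_spec hex
  have hklt : ((2:ℝ) ^ k)⁻¹ < 4 * r := by
    have hle : (2:ℝ) ^ k₀ ≤ 2 ^ k := by
      apply pow_le_pow_right₀ one_le_two (le_max_left _ _)
    have h1 : 1 / (4 * r) < 2 ^ k := lt_of_lt_of_le hspec hle
    rw [div_lt_iff₀ hr4] at h1
    rw [inv_lt_iff_one_lt_mul₀ hpowpos]
    nlinarith
  have h2le : (2:ℕ) ≤ 2 ^ k := by
    calc (2:ℕ) = 2 ^ 1 := rfl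
    _ ≤ 2 ^ k := Nat.pow_le_pow_right (by norm_num) hk1
  have hsmall : 2 ≤ k → 2 * r * 2 ^ k ≤ 1 := by
    intro hk2
    have hkk : k = k₀ := by omega
    have hk₀1 : 1 ≤ k₀ := by omega
    obtain ⟨m, hm⟩ : ∃ m, k₀ = m + 1 := ⟨k₀ - 1, by omega⟩
    have hmin : ¬ (1 / (4 * r) < 2 ^ m) := Nat.find_min hex (by omega)
    push_neg at hmin
    have : (2:ℝ) ^ k = 2 * 2 ^ m := by rw [hkk, hm]; ring
    rw [this]
    rw [le_div_iff₀ hr4] at hmin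
    nlinarith
  -- the base indices
  set m : Fin d → ℕ := fun i => ⌊(2:ℝ) ^ k * (p i - r)⌋₊ with hmdef
  set b : Fin d → ℕ := fun i => min (m i) (2 ^ k - 2) with hbdef
  have hb_le : ∀ i, b i ≤ 2 ^ k - 2 := fun i => min_le_right _ _
  have hb_lt : ∀ i, b i + 1 < 2 ^ k := by intro i; have := hb_le i; omega
  have hb_lo : ∀ i, (b i : ℝ) / 2 ^ k ≤ p i - r := by
    intro i
    rw [div_le_iff₀ hpowpos]
    have h1 : (b i : ℝ) ≤ m i := by exact_mod_cast min_le_left _ _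
    have h2 : (m i : ℝ) ≤ (2:ℝ) ^ k * (p i - r) :=
      Nat.floor_le (mul_nonneg hpowpos.le (hcoord i).1)
    nlinarith [h1, h2]
  have hb_hi : ∀ i, p i + r ≤ ((b i : ℝ) + 2) / 2 ^ k := by
    intro i
    rw [le_div_iff₀ hpowpos]
    rcases le_or_gt (2 ^ k - 2) (m i) with h | h
    · -- boundary case : b i = 2^k - 2
      have hbi : b i = 2 ^ k - 2 := by simp [hbdef, min_eq_right h]
      have hcast : ((b i : ℝ) + 2) = (2:ℝ) ^ k := by
        rw [hbi]
        have : ((2 ^ k - 2 : ℕ) : ℝ) = (2:ℝ) ^ k - 2 := by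
          push_cast [Nat.cast_sub h2le]; ring
        rw [this]; ring
      rw [hcast]
      nlinarith [(hcoord i).2]
    · -- interior case : b i = m i and k ≥ 2
      have hbi : b i = m i := by simp [hbdef, min_eq_left h.le]
      have h3 : 3 ≤ 2 ^ k := by omega
      have hk2 : 2 ≤ k := by
        by_contra hc
        interval_cases k <;> omega
      have hs := hsmall hk2
      have hfl : (2:ℝ) ^ k * (p i - r) < m i + 1 := Nat.lt_floor_add_one _
      rw [hbi]
      nlinarith
  -- the finite set of cubes
  set S : Finset (Fin d → ℕ) :=
    Finset.image (fun f : Fin d → Fin 2 => fun i => b i + (f i : ℕ)) Finset.univ with hSdef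
  have hcard : S.card ≤ 2 ^ d := by
    calc S.card ≤ (Finset.univ : Finset (Fin d → Fin 2)).card := Finset.card_image_le
    _ = 2 ^ d := by simp
  have hidx : ∀ a ∈ S, ∀ i, a i < 2 ^ k := by
    intro a ha i
    simp only [hSdef, Finset.mem_image, Finset.mem_univ, true_and] at ha
    obtain ⟨f, hf⟩ := ha
    have : a i = b i + (f i : ℕ) := by rw [← hf]
    have hfi : (f i : ℕ) ≤ 1 := by omega
    have := hb_lt i
    omega
  have hcover : closedBall p r ⊆ ⋃ a ∈ S, dyadicCube d k a := by
    intro x hx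
    rw [mem_closedBall] at hx
    have hxi : ∀ i, |x i - p i| ≤ r := fun i => (coord_abs_le_dist x p i).trans hx
    set f : Fin d → Fin 2 := fun i => if x i ≤ ((b i : ℝ) + 1) / 2 ^ k then 0 else 1 with hfdef
    refine mem_iUnion₂.mpr ⟨fun i => b i + (f i : ℕ), ?_, ?_⟩
    · simp only [hSdef, Finset.mem_image]; exact ⟨f, Finset.mem_univ f, rfl⟩
    · intro i
      have hlo := hb_lo i
      have hhi := hb_hi i
      have habs := hxi i
      rw [abs_le] at habs
      by_cases hcase : x i ≤ ((b i : ℝ) + 1) / 2 ^ k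
      · have h0 : f i = 0 := by simp [hfdef, hcase]
        simp only [h0, Fin.val_zero]
        constructor
        · push_cast
          calc ((b i : ℝ) + 0) / 2 ^ k = (b i : ℝ) / 2 ^ k := by ring_nf
          _ ≤ p i - r := hlo
          _ ≤ x i := by linarith [habs.2]
        · push_cast
          calc x i ≤ ((b i : ℝ) + 1) / 2 ^ k := hcase
          _ = ((b i : ℝ) + 0 + 1) / 2 ^ k := by ring_nf
      · have h1 : f i = 1 := by simp [hfdef, hcase]
        simp only [h1, Fin.val_one]
        push_neg at hcase
        constructor
        · push_cast
          linarith [hcase]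
        · push_cast
          calc x i ≤ p i + r := by linarith [habs.1]
          _ ≤ ((b i : ℝ) + 2) / 2 ^ k := hhi
          _ = ((b i : ℝ) + 1 + 1) / 2 ^ k := by ring_nf
  -- volume estimate
  have hvol : ∑ a ∈ S, volume (dyadicCube d k a) < ENNReal.ofReal (2 ^ d * (4 * r) ^ d) := by
    have hsum : ∑ a ∈ S, volume (dyadicCube d k a)
        = S.card • (ENNReal.ofReal (((2:ℝ) ^ k)⁻¹)) ^ d := by
      rw [Finset.sum_congr rfl (fun a _ => volume_dyadicCube d k a), Finset.sum_const]
    rw [hsum]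
    have hlt : (ENNReal.ofReal (((2:ℝ) ^ k)⁻¹)) ^ d < (ENNReal.ofReal (4 * r)) ^ d := by
      apply ENNReal.pow_lt_pow_left (by omega)
      exact ENNReal.ofReal_lt_ofReal_iff hr4 |>.mpr hklt
    calc S.card • (ENNReal.ofReal (((2:ℝ) ^ k)⁻¹)) ^ d
        ≤ (2 ^ d : ℕ) • (ENNReal.ofReal (((2:ℝ) ^ k)⁻¹)) ^ d :=
          nsmul_le_nsmul_left zero_le hcard
      _ = (2 : ENNReal) ^ d * (ENNReal.ofReal (((2:ℝ) ^ k)⁻¹)) ^ d := by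
          rw [nsmul_eq_mul]; push_cast; ring
      _ < (2 : ENNReal) ^ d * (ENNReal.ofReal (4 * r)) ^ d := by
          rw [ENNReal.mul_lt_mul_iff_right (by positivity) (by simp : (2:ENNReal)^d ≠ ⊤)]
          exact hlt
      _ = ENNReal.ofReal (2 ^ d * (4 * r) ^ d) := by
          rw [ENNReal.ofReal_mul (by positivity : (0:ℝ) ≤ 2 ^ d), ENNReal.ofReal_pow hr4.le,
            ENNReal.ofReal_pow (by norm_num : (0:ℝ) ≤ 2), ENNReal.ofReal_ofNat]
  exact ⟨k, S, hklt, hcard, hidx, hcover, hvol⟩
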